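/- Let c_S and c_P be real numbers with 0 < c_S < c_P, and let p, q ∈ ℝ. Suppose that p·⟨ξ⁽²⁾, ξ⁽⁰⁾⟩ + q·⟨ξ⁽¹⁾, ξ⁽²⁾⟩·⟨ξ⁽¹⁾, ξ⁽⁰⁾⟩ = 0 for every triple of unit vectors ξ⁽⁰⁾, ξ⁽¹⁾, ξ⁽²⁾ ∈ EuclideanSpace ℝ (Fin 3) such that ξ⁽⁰⁾ and ξ⁽²⁾ are linearly independent and the three vectors (c_S, ξ⁽⁰⁾), (c_P, ξ⁽¹⁾), (c_S, ξ⁽²⁾) are linearly dependent in ℝ × EuclideanSpace ℝ (Fin 3). Then p = 0 and q = 0. -/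

import Mathlib

open scoped RealInnerProductSpace

noncomputable def stmt9V (a b c : ℝ) : EuclideanSpace ℝ (Fin 3) :=
  (WithLp.equiv 2 _).symm ![a, b, c]

lemma stmt9V_norm (a b c : ℝ) (h : a^2 + b^2 + c^2 = 1) : ‖stmt9V a b c‖ = 1 := by
  rw [stmt9V, EuclideanSpace.norm_eq]
  simp only [WithLp.equiv_symm_apply, WithLp.ofLp_toLp, PiLp.toLp_apply, Fin.sum_univ_three, Matrix.cons_val_zero,
    Matrix.cons_val_one, Matrix.head_cons, Matrix.cons_val_two, Matrix.tail_cons,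
    Real.norm_eq_abs, sq_abs]
  rw [show a^2 + b^2 + c^2 = 1 from h]
  exact Real.sqrt_one

lemma stmt9V_inner (a b c d e f : ℝ) : ⟪stmt9V a b c, stmt9V d e f⟫ = a*d + b*e + c*f := by
  simp [stmt9V, PiLp.inner_apply, Fin.sum_univ_three]
  ring

lemma stmt9_key (cS cP : ℝ) (p q : ℝ)
    (h : ∀ ξ0 ξ1 ξ2 : EuclideanSpace ℝ (Fin 3),
      ‖ξ0‖ = 1 → ‖ξ1‖ = 1 → ‖ξ2‖ = 1 →
      LinearIndependent ℝ ![ξ0, ξ2] →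
      ¬ LinearIndependent ℝ
        ![((cS, ξ0) : ℝ × EuclideanSpace ℝ (Fin 3)), (cP, ξ1), (cS, ξ2)] →
      p * ⟪ξ2, ξ0⟫ + q * (⟪ξ1, ξ2⟫ * ⟪ξ1, ξ0⟫) = 0)
    (γ s α β : ℝ) (hs : s ≠ 0) (hγs : γ^2 + s^2 = 1) (hc : (α + β) * cS = cP)
    (hn : α^2 + β^2 + 2*α*β*γ = 1) :
    p * γ + q * (γ + α*β*s^2) = 0 := by
  have hξ0 : ‖stmt9V 1 0 0‖ = 1 := by apply stmt9V_norm; norm_num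
  have hξ2 : ‖stmt9V γ s 0‖ = 1 := by apply stmt9V_norm; linarith
  have hξ1 : ‖stmt9V (α + β*γ) (β*s) 0‖ = 1 := by apply stmt9V_norm; nlinarith
  have hsum : stmt9V (α + β*γ) (β*s) 0 = α • stmt9V 1 0 0 + β • stmt9V γ s 0 := by
    ext i
    fin_cases i <;> simp [stmt9V, WithLp.equiv_symm_apply, WithLp.ofLp_toLp, PiLp.toLp_apply]
  have hli : LinearIndependent ℝ ![stmt9V 1 0 0, stmt9V γ s 0] := by
    rw [LinearIndependent.pair_iff]
    intro a b hab
    have h1 : (a • stmt9V 1 0 0 + b • stmt9V γ s 0) 1 = 0 := by rw [hab]; rfl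
    have h0 : (a • stmt9V 1 0 0 + b • stmt9V γ s 0) 0 = 0 := by rw [hab]; rfl
    simp only [stmt9V, PiLp.add_apply, PiLp.smul_apply, WithLp.equiv_symm_apply, WithLp.ofLp_toLp, PiLp.toLp_apply,
      Matrix.cons_val_zero, Matrix.cons_val_one, Matrix.head_cons, smul_eq_mul] at h0 h1
    have hb : b = 0 := by
      have : b * s = 0 := by linarith
      rcases mul_eq_zero.1 this with hh | hh
      · exact hh
      · exact absurd hh hs
    refine ⟨?_, hb⟩
    rw [hb] at h0; linarith
  have hdep : ¬ LinearIndependent ℝ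
      ![((cS, stmt9V 1 0 0) : ℝ × EuclideanSpace ℝ (Fin 3)),
        (cP, stmt9V (α + β*γ) (β*s) 0), (cS, stmt9V γ s 0)] := by
    intro hli3
    have := Fintype.linearIndependent_iff.1 hli3 ![α, -1, β] ?_ 1
    · simp at this
    · simp [Fin.sum_univ_three, Prod.ext_iff, hsum, hc]
      linarith
  have heq := h (stmt9V 1 0 0) (stmt9V (α + β*γ) (β*s) 0) (stmt9V γ s 0) hξ0 hξ1 hξ2 hli hdep
  rw [stmt9V_inner, stmt9V_inner, stmt9V_inner] at heq
  linear_combination heq - q*γ*hn - q*(β*(α+β*γ) - α*β)*hγs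

set_option maxHeartbeats 1000000 in
theorem stmt_9 (cS cP : ℝ) (hS : 0 < cS) (hSP : cS < cP) (p q : ℝ)
    (h : ∀ ξ0 ξ1 ξ2 : EuclideanSpace ℝ (Fin 3),
      ‖ξ0‖ = 1 → ‖ξ1‖ = 1 → ‖ξ2‖ = 1 →
      LinearIndependent ℝ ![ξ0, ξ2] →
      ¬ LinearIndependent ℝ
        ![((cS, ξ0) : ℝ × EuclideanSpace ℝ (Fin 3)), (cP, ξ1), (cS, ξ2)] →
      p * ⟪ξ2, ξ0⟫ + q * (⟪ξ1, ξ2⟫ * ⟪ξ1, ξ0⟫) = 0) :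
    p = 0 ∧ q = 0 := by
  have key := stmt9_key cS cP p q h
  have hcS : cS ≠ 0 := ne_of_gt hS
  obtain ⟨r, hrdef⟩ : ∃ r : ℝ, r = cP / cS := ⟨_, rfl⟩
  have hr : 1 < r := hrdef ▸ (one_lt_div hS).2 hSP
  have hr0 : r ≠ 0 := by positivity
  have hrc : r * cS = cP := by rw [hrdef]; field_simp
  have h1 : (0:ℝ) < r^2 - 1 := by nlinarith
  set t : ℝ := Real.sqrt (r^2 - 1) with htdef
  have ht2 : t^2 = r^2 - 1 := Real.sq_sqrt (le_of_lt h1)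
  have ht0 : 0 < t := Real.sqrt_pos.2 h1
  have eq1 := key (2/r^2 - 1) (2*t/r^2) (r/2) (r/2)
    (by positivity) (by field_simp; linear_combination 4*ht2) (by rw [← hrc]; ring)
    (by field_simp; ring)
  have h2 : (0:ℝ) < 2*r^2 - 1 := by nlinarith
  set u : ℝ := Real.sqrt (2*r^2 - 1) with hudef
  have hu2 : u^2 = 2*r^2 - 1 := Real.sq_sqrt (le_of_lt h2)
  have hu0 : 0 < u := Real.sqrt_pos.2 h2
  have hu0' : u ≠ 0 := ne_of_gt hu0
  have eq2 := key (1/r^2 - 1) (u/r^2) (r/2 + r/(2*u)) (r/2 - r/(2*u))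
    (by positivity) (by field_simp; linear_combination hu2)
    (by rw [← hrc]; ring)
    (by field_simp; linear_combination (-2) * hu2)
  have hs1 : (2*t/r^2)^2 = 4*(r^2-1)/r^4 := by
    rw [mul_div_assoc, mul_pow, div_pow, ht2]; ring
  have hs2 : (u/r^2)^2 = (2*r^2-1)/r^4 := by
    rw [div_pow, hu2]; ring
  rw [hs1] at eq1
  rw [hs2] at eq2
  have E1 : p * (2 - r^2) + q = 0 := by
    field_simp at eq1
    have h4 : (4*r^6 : ℝ) ≠ 0 := by positivity
    have hx : (p * (2 - r^2) + q) * (4*r^6) = 0 := by linear_combination r^6 * eq1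
    exact (mul_eq_zero.1 hx).resolve_right h4
  have E2 : 2*p + q = 0 := by
    have hq : (1/r^2 - 1) + (r/2 + r/(2*u))*(r/2 - r/(2*u))*((2*r^2-1)/r^4)
        = -(r^2-1)/(2*r^2) := by
      field_simp
      linear_combination hu2
    rw [hq] at eq2
    field_simp at eq2
    have h4 : ((r^2-1)*r^2 : ℝ) ≠ 0 := by positivity
    have hx : (2*p + q) * ((r^2-1)*r^2) = 0 := by linear_combination (-r^2) * eq2
    exact (mul_eq_zero.1 hx).resolve_right h4
  constructor <;> nlinarith [E1, E2, h1]
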